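/- arXiv:1310.8063 — 4 statements merged into one kernel-verified Lean document; each statement's English description precedes it below -/
import Mathlib

section
/- Let n ≥ 1 and for each i ∈ {1,...,n} let f_i : {0,1} → ℤ satisfy f_i(1) > f_i(0) and f_i(1) − f_i(0) > Σ_{j=1}^{i−1} (f_j(1) − f_j(0)). Define F(x) = Σ_{i=1}^n f_i(x_i) for x ∈ {0,1}^n, where x_i denotes the i-th least significant bit. Then for all x, y ∈ {0,1}^n, x > y (as natural numbers under the standard binary interpretation) implies F(x) > F(y). -/
/-- value of a bit string, bit `i` (0-indexed here, i.e. the (i+1)-st least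
significant bit) has weight `2^i`. -/
def bval {n : ℕ} (x : Fin n → Bool) : ℕ := ∑ i, (x i).toNat * 2 ^ (i : ℕ)

private lemma split_sum {n : ℕ} (m : Fin n) (g : Fin n → ℤ)
    (h0 : ∀ j, m < j → g j = 0) :
    ∑ j, g j = (∑ j ∈ Finset.univ.filter (fun j => j < m), g j) + g m := by
  classical
  rw [← Finset.sum_filter_add_sum_filter_not Finset.univ (fun j => j < m)]
  congr 1
  rw [Finset.sum_eq_single_of_mem m (by simp)]
  intro j hj hjm
  exact h0 j (lt_of_le_of_ne (not_lt.mp (Finset.mem_filter.mp hj).2) (Ne.symm hjm))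

private lemma sum_pow_eq {n : ℕ} (m : Fin n) :
    ∑ j ∈ Finset.univ.filter (fun j => j < m), (2:ℤ) ^ (j : ℕ) = 2 ^ (m:ℕ) - 1 := by
  rw [Finset.sum_filter]
  simp only [Fin.lt_def]
  rw [Fin.sum_univ_eq_sum_range (fun k => if k < (m:ℕ) then (2:ℤ)^k else 0)]
  rw [← Finset.sum_subset (Finset.range_subset_range.mpr m.isLt.le)
    (by intro k _ hk; simp only [Finset.mem_range] at hk; simp [hk])]
  rw [Finset.sum_congr rfl (fun k hk => if_pos (Finset.mem_range.mp hk))]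
  have := geom_sum_mul (2:ℤ) (m:ℕ)
  linarith [this]


theorem stmt0 (n : ℕ) (hn : 1 ≤ n) (f : Fin n → Bool → ℤ)
    (hmono : ∀ i, f i true > f i false)
    (hdom : ∀ i : Fin n,
      f i true - f i false >
        ∑ j ∈ Finset.univ.filter (fun j => j < i), (f j true - f j false))
    (F : (Fin n → Bool) → ℤ)
    (hF : ∀ x, F x = ∑ i, f i (x i)) :
    ∀ x y : Fin n → Bool, bval x > bval y → F x > F y := by
  classical
  intro x y hxy
  have hne : x ≠ y := by rintro rfl; exact lt_irrefl _ hxy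
  set S := Finset.univ.filter (fun j => x j ≠ y j) with hS
  have hSne : S.Nonempty := by
    by_contra h
    rw [Finset.not_nonempty_iff_eq_empty, Finset.filter_eq_empty_iff] at h
    exact hne (funext fun j => not_not.mp (h (Finset.mem_univ j)))
  set m := S.max' hSne with hm
  have hmdiff : x m ≠ y m := (Finset.mem_filter.mp (S.max'_mem hSne)).2
  have hgt : ∀ j, m < j → x j = y j := by
    intro j hj
    by_contra h
    exact absurd (S.le_max' j (by simp [hS, h])) (not_le.mpr hj)
  -- bval as integer sum of signed bits
  have hb : (bval x : ℤ) - (bval y : ℤ) =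
      ∑ j, (((x j).toNat : ℤ) - ((y j).toNat : ℤ)) * 2 ^ (j : ℕ) := by
    simp only [bval]
    push_cast
    rw [← Finset.sum_sub_distrib]
    apply Finset.sum_congr rfl
    intro j _
    ring
  -- the top differing bit is 1 in x
  have hxm : x m = true ∧ y m = false := by
    rcases Bool.eq_false_or_eq_true (x m) with hx | hx
    · refine ⟨hx, ?_⟩
      cases hyv : y m
      · rfl
      · exact absurd (hx.trans hyv.symm) hmdiff
    · have hy : y m = true := by
        cases hyv : y m
        · exact absurd (hx.trans hyv.symm) hmdiff
        · rfl
      exfalso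
      have hsplit := split_sum m (fun j => (((x j).toNat : ℤ) - ((y j).toNat : ℤ)) * 2 ^ (j : ℕ))
        (fun j hj => by rw [hgt j hj]; ring)
      have hle : ∑ j ∈ Finset.univ.filter (fun j => j < m),
          (((x j).toNat : ℤ) - ((y j).toNat : ℤ)) * 2 ^ (j : ℕ) ≤ 2 ^ (m : ℕ) - 1 := by
        rw [← sum_pow_eq m]
        apply Finset.sum_le_sum
        intro j _
        have h1 : ((x j).toNat : ℤ) ≤ 1 := by cases x j <;> simp
        have h2 : (0:ℤ) ≤ ((y j).toNat : ℤ) := by positivity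
        have h3 : (0:ℤ) < 2 ^ (j : ℕ) := by positivity
        nlinarith
      have hneg : (bval x : ℤ) - (bval y : ℤ) < 0 := by
        rw [hb, hsplit]
        simp only [hx, hy]
        norm_num
        linarith
      have hpos : (0:ℤ) < (bval x : ℤ) - (bval y : ℤ) := by
        have := hxy
        omega
      linarith
  obtain ⟨hxm1, hym0⟩ := hxm
  -- now compare F
  have hFsplit := split_sum m (fun j => f j (x j) - f j (y j))
    (fun j hj => by rw [hgt j hj]; ring)
  have hlow : ∑ j ∈ Finset.univ.filter (fun j => j < m), (f j (x j) - f j (y j)) ≥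
      - ∑ j ∈ Finset.univ.filter (fun j => j < m), (f j true - f j false) := by
    rw [← Finset.sum_neg_distrib]
    apply Finset.sum_le_sum
    intro j _
    have := hmono j
    cases hxv : x j <;> cases hyv : y j <;> simp <;> linarith
  have hFx : F x - F y = ∑ j, (f j (x j) - f j (y j)) := by
    rw [hF, hF, ← Finset.sum_sub_distrib]
  have hd := hdom m
  have : F x - F y > 0 := by
    rw [hFx, hFsplit]
    simp only [hxm1, hym0]
    linarith
  linarith
end

section
/- Let k ≥ 2, l ≥ 1, s ≥ 0 be integers and define F(x) = Σ_{i=1}^{len(x)} f_i(x_i) where f_i(0) = s, f_i(1) = s + k^i l, and len(x) is the number of bits of x without leading zeros. If a and b are positive integers with a having strictly more bits than b (i.e. i = len(a) > j = len(b)), then F(a) > F(b). -/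
/-- Protocol B function on positive integers: `F a = ∑_{i=1}^{len a} f_i(a_i)`
with `f_i(0)=s`, `f_i(1)=s+k^i l`, where `a_i` is the i-th least significant
bit of `a` and `len a = Nat.size a` is the number of bits without leading
zeros. -/
def FB (s k l : ℤ) (a : ℕ) : ℤ :=
  ∑ i ∈ Finset.Icc 1 (Nat.size a),
    (if a.testBit (i - 1) then s + k ^ i * l else s)

lemma testBit_size_pred {a : ℕ} (ha : 0 < a) : a.testBit (Nat.size a - 1) = true := by
  have h1 : 2 ^ (Nat.size a - 1) ≤ a := by
    rw [← Nat.lt_size]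
    have := Nat.size_pos.mpr ha
    omega
  have h2 : a < 2 ^ Nat.size a := Nat.lt_size_self a
  have hn : Nat.size a - 1 + 1 = Nat.size a := by
    have := Nat.size_pos.mpr ha; omega
  have hdiv : a / 2 ^ (Nat.size a - 1) = 1 := by
    have hlo : 1 ≤ a / 2 ^ (Nat.size a - 1) :=
      (Nat.one_le_div_iff (Nat.pow_pos (by norm_num))).mpr h1
    have hhi : a / 2 ^ (Nat.size a - 1) < 2 := by
      rw [Nat.div_lt_iff_lt_mul (Nat.pow_pos (by norm_num))]
      have he : 2 ^ Nat.size a = 2 ^ (Nat.size a - 1) * 2 := by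
        calc 2 ^ Nat.size a = 2 ^ (Nat.size a - 1 + 1) := by rw [hn]
          _ = 2 ^ (Nat.size a - 1) * 2 := pow_succ 2 _
      omega
    omega
  rw [Nat.testBit_eq_decide_div_mod_eq, hdiv]
  norm_num

lemma geom_bound {k : ℤ} (hk : 2 ≤ k) (j : ℕ) :
    ∑ x ∈ Finset.Icc 1 j, k ^ x ≤ k ^ (j + 1) - k := by
  induction j with
  | zero => simp
  | succ j ih =>
    rw [Finset.sum_Icc_succ_top (by omega)]
    have hkj : (2:ℤ) ≤ k ^ (j+1) := le_trans hk (le_self_pow₀ (by omega) (by omega))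
    have : k ^ (j + 2) = k * k ^ (j + 1) := by ring
    nlinarith

theorem stmt3 (s k l : ℤ) (hs : 0 ≤ s) (hk : 2 ≤ k) (hl : 1 ≤ l)
    (a b : ℕ) (ha : 0 < a) (hb : 0 < b)
    (hlen : Nat.size a > Nat.size b) :
    FB s k l a > FB s k l b := by
  set n := Nat.size a with hn
  set m := Nat.size b with hm
  have hn1 : 1 ≤ n := Nat.size_pos.mpr ha
  have hkpos : (0:ℤ) < k := by omega
  -- lower bound for FB a
  have hmem : n ∈ Finset.Icc 1 n := by simp [hn1]
  have hlb : s * n + k ^ n * l ≤ FB s k l a := by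
    rw [FB, ← Finset.add_sum_erase _ _ hmem]
    have htop : a.testBit (n - 1) = true := testBit_size_pred ha
    rw [htop, if_pos rfl]
    have hterm : ∀ i ∈ (Finset.Icc 1 n).erase n,
        s ≤ (if a.testBit (i - 1) then s + k ^ i * l else s) := by
      intro i hi
      split
      · nlinarith [pow_pos hkpos i]
      · exact le_refl s
    have hcard : ((Finset.Icc 1 n).erase n).card = n - 1 := by
      rw [Finset.card_erase_of_mem hmem, Nat.card_Icc]
      omega
    have hrest := Finset.card_nsmul_le_sum _ _ _ hterm
    rw [hcard, nsmul_eq_mul, Nat.cast_sub hn1] at hrest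
    push_cast at hrest ⊢
    linarith
  -- upper bound for FB b
  have hub : FB s k l b ≤ s * m + (k ^ (m + 1) - k) * l := by
    rw [FB, ← hm]
    have h1 : ∀ i ∈ Finset.Icc 1 m,
        (if b.testBit (i - 1) then s + k ^ i * l else s) ≤ s + k ^ i * l := by
      intro i hi
      split
      · exact le_refl _
      · nlinarith [pow_pos hkpos i]
    calc ∑ i ∈ Finset.Icc 1 m, (if b.testBit (i - 1) then s + k ^ i * l else s)
        ≤ ∑ i ∈ Finset.Icc 1 m, (s + k ^ i * l) := Finset.sum_le_sum h1
      _ = m • s + (∑ i ∈ Finset.Icc 1 m, k ^ i) * l := by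
          rw [Finset.sum_add_distrib, Finset.sum_const, Nat.card_Icc, Finset.sum_mul]
          simp
      _ ≤ s * m + (k ^ (m + 1) - k) * l := by
          have := geom_bound hk m
          rw [nsmul_eq_mul]
          nlinarith
  -- combine
  have hpow : k ^ (m + 1) ≤ k ^ n := pow_le_pow_right₀ (by omega) (by omega)
  have hml : (m:ℤ) ≤ (n:ℤ) := by exact_mod_cast le_of_lt hlen
  have : s * m + (k ^ (m + 1) - k) * l < s * n + k ^ n * l := by nlinarith
  linarith
end

section
/- Let b ∈ {0,1}^n, S = {i : b_i = 0}, Y = {i : b_i = 1}, and suppose f_i : {0,1} → ℤ satisfy: for all i ∈ Y, f_i(1) − f_i(0) > Σ_{j ∈ S, j < i} (f_j(1) − f_j(0)), and for all i ∈ S, f_i(1) − f_i(0) > Σ_{j ∈ Y, j < i} (f_j(1) − f_j(0)), and f_i(1) > f_i(0) for all i. Define F(x) = Σ_{i=1}^n f_i(x_i). Then for every x ∈ {0,1}^n: x < b ⟹ F(x) < F(b). -/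
lemma sum_two_pow_lt (c : ℕ) : ∑ m ∈ Finset.range c, 2 ^ m < 2 ^ c := by
  induction c with
  | zero => simp
  | succ c ih => rw [Finset.sum_range_succ, pow_succ]; omega

theorem stmt9 (n : ℕ) (b : Fin n → Bool) (f : Fin n → Bool → ℤ)
    (hmono : ∀ i, f i true > f i false)
    (hfall : ∀ i : Fin n, b i = true →
      f i true - f i false >
        ∑ j ∈ Finset.univ.filter (fun j => b j = false ∧ j < i),
          (f j true - f j false))
    (hrise : ∀ i : Fin n, b i = false →
      f i true - f i false >
        ∑ j ∈ Finset.univ.filter (fun j => b j = true ∧ j < i),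
          (f j true - f j false))
    (F : (Fin n → Bool) → ℤ)
    (hF : ∀ x, F x = ∑ i, f i (x i)) :
    ∀ x : Fin n → Bool, bval x < bval b → F x < F b := by
  intro x hlt
  have hne : x ≠ b := fun h => by subst h; exact lt_irrefl _ hlt
  have hD : (Finset.univ.filter (fun i => x i ≠ b i)).Nonempty := by
    rcases Function.ne_iff.mp hne with ⟨i, hi⟩
    exact ⟨i, by simp [hi]⟩
  set k := (Finset.univ.filter (fun i => x i ≠ b i)).max' hD with hkdef
  have hkmem := (Finset.univ.filter (fun i => x i ≠ b i)).max'_mem hD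
  have hkne : x k ≠ b k := by
    rw [← hkdef] at hkmem
    simpa using hkmem
  have htop : ∀ j, k < j → x j = b j := by
    intro j hj
    by_contra h
    exact absurd (Finset.le_max' _ j (by simp [h])) (not_le.mpr hj)
  have hbk : b k = true := by
    by_contra h
    have hbk' : b k = false := by simpa using h
    have hxk : x k = true := by
      cases hx : x k
      · exact absurd (hx.trans hbk'.symm) hkne
      · rfl
    have heqtop : ∑ i ∈ Finset.univ.filter (fun i => k < i), (x i).toNat * 2 ^ (i : ℕ)
        = ∑ i ∈ Finset.univ.filter (fun i => k < i), (b i).toNat * 2 ^ (i : ℕ) := by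
      apply Finset.sum_congr rfl
      intro i hi
      rw [htop i (by simpa using hi)]
    have ex : bval x = (∑ i ∈ Finset.univ.filter (fun i => k < i), (x i).toNat * 2 ^ (i : ℕ))
        + ∑ i ∈ Finset.univ.filter (fun i => ¬ k < i), (x i).toNat * 2 ^ (i : ℕ) :=
      (Finset.sum_filter_add_sum_filter_not _ _ _).symm
    have eb : bval b = (∑ i ∈ Finset.univ.filter (fun i => k < i), (b i).toNat * 2 ^ (i : ℕ))
        + ∑ i ∈ Finset.univ.filter (fun i => ¬ k < i), (b i).toNat * 2 ^ (i : ℕ) :=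
      (Finset.sum_filter_add_sum_filter_not _ _ _).symm
    have hxlow : 2 ^ (k : ℕ) ≤ ∑ i ∈ Finset.univ.filter (fun i => ¬ k < i), (x i).toNat * 2 ^ (i : ℕ) := by
      have hkm : k ∈ Finset.univ.filter (fun i : Fin n => ¬ k < i) := by simp
      calc 2 ^ (k : ℕ) = (x k).toNat * 2 ^ (k : ℕ) := by rw [hxk]; simp
        _ ≤ _ := Finset.single_le_sum (f := fun i : Fin n => (x i).toNat * 2 ^ (i : ℕ))
          (fun i _ => Nat.zero_le _) hkm
    have hblow : ∑ i ∈ Finset.univ.filter (fun i => ¬ k < i), (b i).toNat * 2 ^ (i : ℕ) < 2 ^ (k : ℕ) := by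
      have h1 : ∑ i ∈ Finset.univ.filter (fun i => ¬ k < i), (b i).toNat * 2 ^ (i : ℕ)
          ≤ ∑ i ∈ Finset.univ.filter (fun i : Fin n => ¬ k < i),
              (if i < k then 2 ^ (i : ℕ) else 0) := by
        apply Finset.sum_le_sum
        intro i hi
        have hik : i ≤ k := le_of_not_gt (by simpa using hi)
        rcases eq_or_lt_of_le hik with rfl | hlt'
        · simp [hbk']
        · rw [if_pos hlt']
          have : (b i).toNat ≤ 1 := Bool.toNat_le _
          calc (b i).toNat * 2 ^ (i : ℕ) ≤ 1 * 2 ^ (i : ℕ) := Nat.mul_le_mul_right _ this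
            _ = 2 ^ (i : ℕ) := one_mul _
      have h2 : ∑ i ∈ Finset.univ.filter (fun i : Fin n => ¬ k < i),
            (if i < k then 2 ^ (i : ℕ) else 0)
          ≤ ∑ i : Fin n, (if i < k then 2 ^ (i : ℕ) else 0) := by
        apply Finset.sum_le_sum_of_subset_of_nonneg (Finset.filter_subset _ _)
        intro i _ _
        positivity
      have h3 : ∑ i : Fin n, (if i < k then 2 ^ (i : ℕ) else 0)
          = ∑ m ∈ Finset.range (k : ℕ), 2 ^ m := by
        simp only [Fin.lt_def]
        rw [Fin.sum_univ_eq_sum_range (fun m => if m < (k : ℕ) then 2 ^ m else 0),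
          ← Finset.sum_filter]
        congr 1
        ext m
        simp only [Finset.mem_filter, Finset.mem_range]
        constructor
        · rintro ⟨_, hm⟩; exact hm
        · intro hm; exact ⟨lt_of_lt_of_le hm (le_of_lt k.isLt), hm⟩
      have h4 := sum_two_pow_lt (k : ℕ)
      omega
    omega
  have hxk : x k = false := by
    cases hx : x k
    · rfl
    · exact absurd (hx.trans hbk.symm) hkne
  classical
  set h : Fin n → ℤ := fun i =>
    (if i = k then f k true - f k false else 0)
    + (if b i = false ∧ i < k then -(f i true - f i false) else 0) with hh
  have hterm : ∀ i ∈ Finset.univ, h i ≤ f i (b i) - f i (x i) := by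
    intro i _
    rcases eq_or_ne i k with rfl | hik
    · simp [hh, hbk, hxk]
    · simp only [hh, if_neg hik, zero_add]
      rcases lt_or_ge i k with hlt' | hge
      · cases hbi : b i
        · rw [if_pos ⟨rfl, hlt'⟩]
          cases hxi : x i
          · have := hmono i; linarith
          · linarith
        · rw [if_neg (by simp)]
          cases hxi : x i
          · have := hmono i; linarith
          · linarith
      · have hxi := htop i (lt_of_le_of_ne hge (Ne.symm hik))
        rw [hxi, if_neg (fun hc => absurd hc.2 (not_lt.mpr hge))]
        linarith
  have hsum : ∑ i, h i = (f k true - f k false)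
      - ∑ j ∈ Finset.univ.filter (fun j => b j = false ∧ j < k), (f j true - f j false) := by
    simp only [hh]
    rw [Finset.sum_add_distrib]
    have h1 : ∑ i : Fin n, (if i = k then f k true - f k false else 0)
        = f k true - f k false := by
      rw [Finset.sum_ite_eq' Finset.univ k (fun _ => f k true - f k false)]
      simp
    have h2 : ∑ i : Fin n, (if b i = false ∧ i < k then -(f i true - f i false) else 0)
        = - ∑ j ∈ Finset.univ.filter (fun j => b j = false ∧ j < k), (f j true - f j false) := by
      rw [← Finset.sum_neg_distrib, ← Finset.sum_filter]
    rw [h1, h2]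
    ring
  have key : 0 < ∑ i, (f i (b i) - f i (x i)) := by
    have h5 := Finset.sum_le_sum hterm
    have h6 := hfall k hbk
    rw [hsum] at h5
    linarith
  rw [hF, hF]
  have h7 : ∑ i, (f i (b i) - f i (x i)) = (∑ i, f i (b i)) - ∑ i, f i (x i) :=
    Finset.sum_sub_distrib _ _
  linarith
end

section
/- With the same setup as the order-preserving-at-b construction (rises dominate earlier falls and falls dominate earlier rises, and f_i(1) > f_i(0) for all i), for every x ∈ {0,1}^n: x > b ⟹ F(x) > F(b). Combining with the other direction, F(x) < F(b) ⟺ x < b and F(x) > F(b) ⟺ x > b for all x. -/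
set_option maxRecDepth 4000

open Finset

lemma sum_range_two_pow_lt (m : ℕ) : ∑ k ∈ Finset.range m, 2 ^ k < 2 ^ m := by
  induction m with
  | zero => simp
  | succ m ih => rw [Finset.sum_range_succ, pow_succ]; omega

lemma bval_split {n : ℕ} (x : Fin n → Bool) (i : Fin n) :
    bval x = (∑ j ∈ Finset.univ.filter (fun j => j < i), (x j).toNat * 2 ^ (j:ℕ))
      + ((x i).toNat * 2 ^ (i:ℕ)
      + ∑ j ∈ Finset.univ.filter (fun j => i < j), (x j).toNat * 2 ^ (j:ℕ)) := by
  unfold bval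
  rw [← Finset.sum_filter_add_sum_filter_not Finset.univ (fun j => j < i)]
  congr 1
  have h : Finset.univ.filter (fun j : Fin n => ¬ j < i)
      = insert i (Finset.univ.filter (fun j => i < j)) := by
    ext j
    simp only [Finset.mem_filter, Finset.mem_univ, true_and, Finset.mem_insert,
      Fin.lt_def, Fin.ext_iff]
    omega
  rw [h, Finset.sum_insert (by simp)]

lemma low_sum_lt {n : ℕ} (x : Fin n → Bool) (i : Fin n) :
    (∑ j ∈ Finset.univ.filter (fun j => j < i), (x j).toNat * 2 ^ (j:ℕ)) < 2 ^ (i:ℕ) := by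
  have h1 : (∑ j ∈ Finset.univ.filter (fun j => j < i), (x j).toNat * 2 ^ (j:ℕ))
      ≤ ∑ j ∈ Finset.univ.filter (fun j : Fin n => j < i), 2 ^ (j:ℕ) := by
    apply Finset.sum_le_sum
    intro j _
    have h := Bool.toNat_le (x j)
    calc (x j).toNat * 2 ^ (j:ℕ) ≤ 1 * 2 ^ (j:ℕ) := Nat.mul_le_mul_right _ h
    _ = 2 ^ (j:ℕ) := one_mul _
  have h2 : ∑ j ∈ Finset.univ.filter (fun j : Fin n => j < i), 2 ^ (j:ℕ)
      = ∑ k ∈ Finset.range (i:ℕ), 2 ^ k := by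
    rw [Finset.sum_filter]
    have h3 : (∑ j : Fin n, if j < i then 2 ^ (j:ℕ) else 0)
        = ∑ j : Fin n, (fun k => if k < (i:ℕ) then 2 ^ k else 0) (j:ℕ) :=
      Finset.sum_congr rfl (fun j _ => by simp only [Fin.lt_def])
    rw [h3, Fin.sum_univ_eq_sum_range (fun k => if k < (i:ℕ) then 2 ^ k else 0)]
    rw [← Finset.sum_filter]
    congr 1
    ext k
    simp only [Finset.mem_filter, Finset.mem_range]
    have := i.isLt
    omega
  calc _ ≤ _ := h1
  _ = _ := h2
  _ < _ := sum_range_two_pow_lt _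

lemma bval_lt_msb {n : ℕ} (b x : Fin n → Bool) (i : Fin n)
    (hx : x i = true) (hb : b i = false) (hhigh : ∀ j, i < j → x j = b j) :
    bval b < bval x := by
  rw [bval_split b i, bval_split x i, hx, hb]
  have hC : (∑ j ∈ Finset.univ.filter (fun j => i < j), (x j).toNat * 2 ^ (j:ℕ))
      = ∑ j ∈ Finset.univ.filter (fun j => i < j), (b j).toNat * 2 ^ (j:ℕ) := by
    apply Finset.sum_congr rfl
    intro j hj
    rw [hhigh j (Finset.mem_filter.mp hj).2]
  rw [hC]
  have hA := low_sum_lt b i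
  have hA' : 0 ≤ ∑ j ∈ Finset.univ.filter (fun j => j < i), (x j).toNat * 2 ^ (j:ℕ) :=
    Nat.zero_le _
  simp only [Bool.toNat_true, Bool.toNat_false, one_mul, zero_mul, zero_add]
  omega

lemma F_diff {n : ℕ} (x b : Fin n → Bool) (f : Fin n → Bool → ℤ) :
    (∑ i, f i (x i)) - (∑ i, f i (b i))
      = (∑ j ∈ Finset.univ.filter (fun j => x j ≠ b j ∧ b j = false),
          (f j true - f j false))
        - ∑ j ∈ Finset.univ.filter (fun j => x j ≠ b j ∧ b j = true),
          (f j true - f j false) := by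
  rw [← Finset.sum_sub_distrib]
  have h0 : (∑ i, (f i (x i) - f i (b i)))
      = ∑ j ∈ Finset.univ.filter (fun j => x j ≠ b j), (f j (x j) - f j (b j)) := by
    symm
    apply Finset.sum_subset (Finset.subset_univ _)
    intro j _ hj
    simp only [Finset.mem_filter, Finset.mem_univ, true_and, not_not] at hj
    rw [hj]; ring
  rw [h0, ← Finset.sum_filter_add_sum_filter_not
    (Finset.univ.filter (fun j => x j ≠ b j)) (fun j => b j = false)]
  have e1 : (Finset.univ.filter (fun j => x j ≠ b j)).filter (fun j => b j = false)
      = Finset.univ.filter (fun j => x j ≠ b j ∧ b j = false) := by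
    rw [Finset.filter_filter]
  have e2 : (Finset.univ.filter (fun j => x j ≠ b j)).filter (fun j => ¬ b j = false)
      = Finset.univ.filter (fun j => x j ≠ b j ∧ b j = true) := by
    rw [Finset.filter_filter]
    congr 1
    ext j
    simp
  rw [e1, e2]
  have e3 : ∀ j ∈ Finset.univ.filter (fun j => x j ≠ b j ∧ b j = false),
      f j (x j) - f j (b j) = f j true - f j false := by
    intro j hj
    simp only [Finset.mem_filter, Finset.mem_univ, true_and] at hj
    have hx : x j = true := by
      cases hxj : x j
      · exact absurd (hxj.trans hj.2.symm) hj.1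
      · rfl
    rw [hx, hj.2]
  have e4 : ∀ j ∈ Finset.univ.filter (fun j => x j ≠ b j ∧ b j = true),
      f j (x j) - f j (b j) = -(f j true - f j false) := by
    intro j hj
    simp only [Finset.mem_filter, Finset.mem_univ, true_and] at hj
    have hx : x j = false := by
      cases hxj : x j
      · rfl
      · exact absurd (hxj.trans hj.2.symm) hj.1
    rw [hx, hj.2]; ring
  rw [Finset.sum_congr rfl e3, Finset.sum_congr rfl e4, Finset.sum_neg_distrib]
  ring

lemma max_diff {n : ℕ} (x b : Fin n → Bool) (hne : x ≠ b) :
    ∃ i : Fin n, x i ≠ b i ∧ ∀ j, i < j → x j = b j := by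
  classical
  set D := Finset.univ.filter (fun j => x j ≠ b j) with hD
  have hDne : D.Nonempty := by
    obtain ⟨j, hj⟩ := Function.ne_iff.mp hne
    exact ⟨j, by simp [hD, hj]⟩
  refine ⟨D.max' hDne, ?_, ?_⟩
  · have := D.max'_mem hDne
    simpa [hD] using this
  · intro j hj
    by_contra hcon
    have hjD : j ∈ D := by simp [hD, hcon]
    exact absurd (D.le_max' j hjD) (not_le.mpr hj)

lemma keyGT {n : ℕ} (b : Fin n → Bool) (f : Fin n → Bool → ℤ)
    (hmono : ∀ i, f i true > f i false)
    (hrise : ∀ i : Fin n, b i = false →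
      f i true - f i false >
        ∑ j ∈ Finset.univ.filter (fun j => b j = true ∧ j < i),
          (f j true - f j false))
    (x : Fin n → Bool) (hlt : bval b < bval x) :
    (∑ i, f i (b i)) < ∑ i, f i (x i) := by
  classical
  have hne : x ≠ b := by
    rintro rfl; exact lt_irrefl _ hlt
  obtain ⟨i₀, hdiff, hhigh⟩ := max_diff x b hne
  cases hxi : x i₀ with
  | false =>
    have hbi : b i₀ = true := by
      cases hbi : b i₀
      · exact absurd (hxi.trans hbi.symm) hdiff
      · rfl
    have : bval x < bval b :=
      bval_lt_msb x b i₀ hbi hxi (fun j hj => (hhigh j hj).symm)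
    omega
  | true =>
    have hbi : b i₀ = false := by
      cases hbi : b i₀
      · rfl
      · exact absurd (hxi.trans hbi.symm) hdiff
    have hd := F_diff x b f
    have hsub : Finset.univ.filter (fun j => x j ≠ b j ∧ b j = true)
        ⊆ Finset.univ.filter (fun j => b j = true ∧ j < i₀) := by
      intro j hj
      simp only [Finset.mem_filter, Finset.mem_univ, true_and] at hj ⊢
      refine ⟨hj.2, ?_⟩
      have hji : j ≠ i₀ := by
        rintro rfl; rw [hj.2] at hbi; exact Bool.noConfusion hbi
      rcases lt_or_ge j i₀ with h | h
      · exact h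
      · have : i₀ < j := lt_of_le_of_ne h (fun e => hji e.symm)
        exact absurd (hhigh j this) hj.1
    have hnonneg : ∀ j : Fin n, 0 ≤ f j true - f j false :=
      fun j => sub_nonneg.mpr (le_of_lt (hmono j))
    have h2 : (∑ j ∈ Finset.univ.filter (fun j => x j ≠ b j ∧ b j = true),
        (f j true - f j false))
        ≤ ∑ j ∈ Finset.univ.filter (fun j => b j = true ∧ j < i₀),
          (f j true - f j false) :=
      Finset.sum_le_sum_of_subset_of_nonneg hsub (fun j _ _ => hnonneg j)
    have h3 := hrise i₀ hbi
    have h4 : f i₀ true - f i₀ false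
        ≤ ∑ j ∈ Finset.univ.filter (fun j => x j ≠ b j ∧ b j = false),
          (f j true - f j false) := by
      apply Finset.single_le_sum (fun j _ => hnonneg j)
      simp only [Finset.mem_filter, Finset.mem_univ, true_and]
      exact ⟨hdiff, hbi⟩
    linarith

lemma keyLT {n : ℕ} (b : Fin n → Bool) (f : Fin n → Bool → ℤ)
    (hmono : ∀ i, f i true > f i false)
    (hfall : ∀ i : Fin n, b i = true →
      f i true - f i false >
        ∑ j ∈ Finset.univ.filter (fun j => b j = false ∧ j < i),
          (f j true - f j false))
    (x : Fin n → Bool) (hlt : bval x < bval b) :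
    (∑ i, f i (x i)) < ∑ i, f i (b i) := by
  classical
  have hne : x ≠ b := by
    rintro rfl; exact lt_irrefl _ hlt
  obtain ⟨i₀, hdiff, hhigh⟩ := max_diff x b hne
  cases hxi : x i₀ with
  | true =>
    have hbi : b i₀ = false := by
      cases hbi : b i₀
      · rfl
      · exact absurd (hxi.trans hbi.symm) hdiff
    have : bval b < bval x := bval_lt_msb b x i₀ hxi hbi hhigh
    omega
  | false =>
    have hbi : b i₀ = true := by
      cases hbi : b i₀
      · exact absurd (hxi.trans hbi.symm) hdiff
      · rfl
    have hd := F_diff x b f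
    have hsub : Finset.univ.filter (fun j => x j ≠ b j ∧ b j = false)
        ⊆ Finset.univ.filter (fun j => b j = false ∧ j < i₀) := by
      intro j hj
      simp only [Finset.mem_filter, Finset.mem_univ, true_and] at hj ⊢
      refine ⟨hj.2, ?_⟩
      have hji : j ≠ i₀ := by
        rintro rfl; rw [hj.2] at hbi; exact Bool.noConfusion hbi
      rcases lt_or_ge j i₀ with h | h
      · exact h
      · have : i₀ < j := lt_of_le_of_ne h (fun e => hji e.symm)
        exact absurd (hhigh j this) hj.1
    have hnonneg : ∀ j : Fin n, 0 ≤ f j true - f j false :=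
      fun j => sub_nonneg.mpr (le_of_lt (hmono j))
    have h2 : (∑ j ∈ Finset.univ.filter (fun j => x j ≠ b j ∧ b j = false),
        (f j true - f j false))
        ≤ ∑ j ∈ Finset.univ.filter (fun j => b j = false ∧ j < i₀),
          (f j true - f j false) :=
      Finset.sum_le_sum_of_subset_of_nonneg hsub (fun j _ _ => hnonneg j)
    have h3 := hfall i₀ hbi
    have h4 : f i₀ true - f i₀ false
        ≤ ∑ j ∈ Finset.univ.filter (fun j => x j ≠ b j ∧ b j = true),
          (f j true - f j false) := by
      apply Finset.single_le_sum (fun j _ => hnonneg j)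
      simp only [Finset.mem_filter, Finset.mem_univ, true_and]
      exact ⟨hdiff, hbi⟩
    linarith

lemma bval_inj {n : ℕ} (x b : Fin n → Bool) (h : bval x = bval b) : x = b := by
  by_contra hne
  obtain ⟨i₀, hdiff, hhigh⟩ := max_diff x b hne
  cases hxi : x i₀ with
  | true =>
    have hbi : b i₀ = false := by
      cases hbi : b i₀
      · rfl
      · exact absurd (hxi.trans hbi.symm) hdiff
    have := bval_lt_msb b x i₀ hxi hbi hhigh
    omega
  | false =>
    have hbi : b i₀ = true := by
      cases hbi : b i₀
      · exact absurd (hxi.trans hbi.symm) hdiff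
      · rfl
    have := bval_lt_msb x b i₀ hbi hxi (fun j hj => (hhigh j hj).symm)
    omega

theorem stmt10 (n : ℕ) (b : Fin n → Bool) (f : Fin n → Bool → ℤ)
    (hmono : ∀ i, f i true > f i false)
    (hfall : ∀ i : Fin n, b i = true →
      f i true - f i false >
        ∑ j ∈ Finset.univ.filter (fun j => b j = false ∧ j < i),
          (f j true - f j false))
    (hrise : ∀ i : Fin n, b i = false →
      f i true - f i false >
        ∑ j ∈ Finset.univ.filter (fun j => b j = true ∧ j < i),
          (f j true - f j false))
    (F : (Fin n → Bool) → ℤ)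
    (hF : ∀ x, F x = ∑ i, f i (x i)) :
    (∀ x : Fin n → Bool, bval x > bval b → F x > F b) ∧
    (∀ x : Fin n → Bool, (F x < F b ↔ bval x < bval b) ∧
                          (F x > F b ↔ bval x > bval b)) := by
  have hgt : ∀ x : Fin n → Bool, bval x > bval b → F x > F b := by
    intro x hx
    rw [hF x, hF b]
    exact keyGT b f hmono hrise x hx
  have hlt : ∀ x : Fin n → Bool, bval x < bval b → F x < F b := by
    intro x hx
    rw [hF x, hF b]
    exact keyLT b f hmono hfall x hx
  refine ⟨hgt, fun x => ⟨⟨?_, hlt x⟩, ⟨?_, hgt x⟩⟩⟩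
  · intro h
    rcases lt_trichotomy (bval x) (bval b) with h' | h' | h'
    · exact h'
    · rw [bval_inj x b h'] at h; exact absurd h (lt_irrefl _)
    · exact absurd (hgt x h') (not_lt.mpr (le_of_lt h))
  · intro h
    rcases lt_trichotomy (bval x) (bval b) with h' | h' | h'
    · exact absurd (hlt x h') (not_lt.mpr (le_of_lt h))
    · rw [bval_inj x b h'] at h; exact absurd h (lt_irrefl _)
    · exact h'
end
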